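/- Let θ^n : pairs of times → ℝ^{d₂} be increment functions and suppose (2^n/κ)·Σ_{k=1}^{2^n} |θ^n(t_{k-1}^n, t_k^n)| is bounded uniformly in n, where θ^n(t_{k-1},t_k) are the increments of continuous functions θ^n : [0,1] → ℝ^{d₂} with θ^n → θ uniformly. Then θ ≡ 0. -/

import Mathlib

open Filter

/-- Let `θⁿ : [0,1] → ℝ^{d₂}` be continuous functions starting at `0`, converging uniformly
to `θ`, and suppose `(2^n/κ) Σ_{k=1}^{2^n} |θⁿ(t_k^n) - θⁿ(t_{k-1}^n)|` is bounded uniformly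
in `n` (with `t_k^n = k 2^{-n}` and `κ > 0`).  Then `θ ≡ 0` on `[0,1]`. -/
theorem stmt_15 (d₂ : ℕ) (κ M : ℝ) (hκ : 0 < κ)
    (θn : ℕ → ℝ → EuclideanSpace ℝ (Fin d₂)) (θ : ℝ → EuclideanSpace ℝ (Fin d₂))
    (hcont : ∀ n, ContinuousOn (θn n) (Set.Icc 0 1))
    (hzero : ∀ n, θn n 0 = 0)
    (hunif : TendstoUniformlyOn θn θ atTop (Set.Icc 0 1))
    (hbdd : ∀ n : ℕ, (2 ^ n / κ) * ∑ k ∈ Finset.range (2 ^ n),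
        ‖θn n ((k + 1 : ℕ) / 2 ^ n) - θn n ((k : ℕ) / 2 ^ n)‖ ≤ M) :
    ∀ t ∈ Set.Icc (0 : ℝ) 1, θ t = 0 := by
  -- Step 1: at grid points, ‖θn n (j/2^n)‖ ≤ κ M / 2^n
  have key : ∀ n : ℕ, ∀ j : ℕ, j ≤ 2 ^ n →
      ‖θn n ((j : ℝ) / 2 ^ n)‖ ≤ κ * M / 2 ^ n := by
    intro n j hj
    have hpow : (0 : ℝ) < 2 ^ n := by positivity
    have hS : ∑ k ∈ Finset.range (2 ^ n),
        ‖θn n ((k + 1 : ℕ) / 2 ^ n) - θn n ((k : ℕ) / 2 ^ n)‖ ≤ κ * M / 2 ^ n := by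
      have h := hbdd n
      rw [div_mul_eq_mul_div, div_le_iff₀ hκ] at h
      rw [le_div_iff₀ hpow]
      nlinarith [h]
    have htel : θn n ((j : ℝ) / 2 ^ n)
        = ∑ k ∈ Finset.range j, (θn n ((k + 1 : ℕ) / 2 ^ n) - θn n ((k : ℕ) / 2 ^ n)) := by
      rw [Finset.sum_range_sub (fun k => θn n ((k : ℕ) / 2 ^ n))]
      simp [hzero n]
    calc ‖θn n ((j : ℝ) / 2 ^ n)‖
        ≤ ∑ k ∈ Finset.range j, ‖θn n ((k + 1 : ℕ) / 2 ^ n) - θn n ((k : ℕ) / 2 ^ n)‖ := by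
          rw [htel]; exact norm_sum_le _ _
      _ ≤ ∑ k ∈ Finset.range (2 ^ n),
            ‖θn n ((k + 1 : ℕ) / 2 ^ n) - θn n ((k : ℕ) / 2 ^ n)‖ := by
          apply Finset.sum_le_sum_of_subset_of_nonneg
          · exact Finset.range_mono hj
          · intro i _ _; exact norm_nonneg _
      _ ≤ κ * M / 2 ^ n := hS
  -- Step 2: θ vanishes at dyadic points
  have dyadic : ∀ m : ℕ, ∀ j : ℕ, j ≤ 2 ^ m → θ ((j : ℝ) / 2 ^ m) = 0 := by
    intro m j hj
    set t0 : ℝ := (j : ℝ) / 2 ^ m with ht0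
    have hpow : (0 : ℝ) < 2 ^ m := by positivity
    have ht0mem : t0 ∈ Set.Icc (0 : ℝ) 1 := by
      constructor
      · positivity
      · rw [div_le_one hpow]
        exact_mod_cast (Nat.cast_le.mpr hj).trans_eq (by push_cast; ring)
    have h1 : Tendsto (fun n => θn n t0) atTop (nhds (θ t0)) :=
      hunif.tendsto_at ht0mem
    have h2 : Tendsto (fun n => θn n t0) atTop (nhds 0) := by
      refine squeeze_zero_norm' (a := fun n : ℕ => κ * M / 2 ^ n) ?_ ?_
      · filter_upwards [eventually_ge_atTop m] with n hn
        have hrepr : t0 = ((j * 2 ^ (n - m) : ℕ) : ℝ) / 2 ^ n := by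
          have h2n : (2 : ℝ) ^ (n - m) * 2 ^ m = 2 ^ n := by
            rw [← pow_add, Nat.sub_add_cancel hn]
          push_cast
          rw [ht0, div_eq_div_iff hpow.ne' (by positivity : ((2:ℝ)^n) ≠ 0)]
          calc (j : ℝ) * 2 ^ n = (j : ℝ) * (2 ^ (n - m) * 2 ^ m) := by rw [h2n]
            _ = (j : ℝ) * 2 ^ (n - m) * 2 ^ m := by ring
        rw [hrepr]
        apply key n
        calc j * 2 ^ (n - m) ≤ 2 ^ m * 2 ^ (n - m) := Nat.mul_le_mul_right _ hj
          _ = 2 ^ n := by rw [← pow_add, Nat.add_sub_cancel' hn]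
      · have : Tendsto (fun n : ℕ => (κ * M) * (1 / 2) ^ n) atTop (nhds ((κ * M) * 0)) :=
          tendsto_const_nhds.mul (tendsto_pow_atTop_nhds_zero_of_lt_one (by norm_num) (by norm_num))
        simpa [div_eq_mul_inv, inv_pow] using this
    have := tendsto_nhds_unique h1 h2
    rwa [ht0] at this
  -- Step 3: θ is continuous on [0,1]; dyadics are dense
  have hθcont : ContinuousOn θ (Set.Icc 0 1) :=
    hunif.continuousOn (Eventually.of_forall hcont).frequently
  intro t ht
  obtain ⟨ht0, ht1⟩ := ht
  set s : ℕ → ℝ := fun k => (⌊t * 2 ^ k⌋₊ : ℝ) / 2 ^ k with hs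
  have hsmem : ∀ k, s k ∈ Set.Icc (0 : ℝ) 1 ∧ θ (s k) = 0 := by
    intro k
    have hjle : ⌊t * 2 ^ k⌋₊ ≤ 2 ^ k := by
      apply Nat.floor_le_of_le
      calc t * 2 ^ k ≤ 1 * 2 ^ k := by
            apply mul_le_mul_of_nonneg_right ht1 (by positivity)
        _ = ((2 ^ k : ℕ) : ℝ) := by push_cast; ring
    have hz := dyadic k _ hjle
    refine ⟨⟨by positivity, ?_⟩, hz⟩
    rw [div_le_one (by positivity)]
    exact_mod_cast (Nat.cast_le.mpr hjle).trans_eq (by push_cast; ring)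
  have hstend : Tendsto s atTop (nhds t) := by
    have hpos : ∀ k : ℕ, (0:ℝ) < 2 ^ k := fun k => by positivity
    refine tendsto_of_tendsto_of_tendsto_of_le_of_le
      (g := fun k : ℕ => t - (1/2) ^ k) (h := fun _ => t) ?_ ?_ ?_ ?_
    · have : Tendsto (fun k : ℕ => t - (1/2:ℝ) ^ k) atTop (nhds (t - 0)) :=
        tendsto_const_nhds.sub (tendsto_pow_atTop_nhds_zero_of_lt_one (by norm_num) (by norm_num))
      simpa using this
    · exact tendsto_const_nhds
    · intro k
      have h1 : t * 2 ^ k < ⌊t * 2 ^ k⌋₊ + 1 := Nat.lt_floor_add_one _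
      rw [hs]
      rw [sub_le_iff_le_add, div_add' _ _ _ (hpos k).ne', le_div_iff₀ (hpos k)]
      have : (1/2:ℝ) ^ k * 2 ^ k = 1 := by
        rw [← mul_pow]; norm_num
      nlinarith [h1]
    · intro k
      rw [hs, div_le_iff₀ (hpos k)]
      exact Nat.floor_le (by positivity)
  have hsw : Tendsto s atTop (nhdsWithin t (Set.Icc 0 1)) := by
    apply tendsto_nhdsWithin_of_tendsto_nhds_of_eventually_within _ hstend
    exact Eventually.of_forall fun k => (hsmem k).1
  have hlim : Tendsto (fun k => θ (s k)) atTop (nhds (θ t)) :=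
    (hθcont t ⟨ht0, ht1⟩).tendsto.comp hsw
  have hconst : Tendsto (fun k => θ (s k)) atTop (nhds 0) := by
    have : (fun k => θ (s k)) = fun _ => (0 : EuclideanSpace ℝ (Fin d₂)) :=
      funext fun k => (hsmem k).2
    rw [this]; exact tendsto_const_nhds
  exact tendsto_nhds_unique hlim hconst
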